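/- Fix s > 0, and for λ > 0 let G(λ) = (∑_{i=1}^∞ i^s exp(-λ i^s)) / (∑_{i=1}^∞ exp(-λ i^s)). Then λ·s·G(λ) → 1 as λ → 0+. -/

import Mathlib

open Filter MeasureTheory Set

namespace MaxEntAux

variable {s l : ℝ}

noncomputable def g (l s x : ℝ) : ℝ := Real.exp (-l * x ^ s)
noncomputable def f (l s x : ℝ) : ℝ := x ^ s * Real.exp (-l * x ^ s)
noncomputable def df (l s x : ℝ) : ℝ :=
  s * x ^ (s - 1) * Real.exp (-l * x ^ s) +
    x ^ s * (Real.exp (-l * x ^ s) * (-l * (s * x ^ (s - 1))))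
noncomputable def phi (l s x : ℝ) : ℝ :=
  s * x ^ (s - 1) * Real.exp (-l * x ^ s) + l * s * x ^ (2 * s - 1) * Real.exp (-l * x ^ s)

lemma cont_rpow (hs : 0 < s) : Continuous fun x : ℝ => x ^ s :=
  continuous_iff_continuousAt.mpr fun x => Real.continuousAt_rpow_const x s (Or.inr hs.le)

lemma cont_g (hs : 0 < s) : Continuous (g l s) :=
  Real.continuous_exp.comp (continuous_const.mul (cont_rpow hs))

lemma cont_f (hs : 0 < s) : Continuous (f l s) :=
  (cont_rpow hs).mul (cont_g hs)

lemma g_nonneg (x : ℝ) : 0 ≤ g l s x := (Real.exp_pos _).le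

lemma f_nonneg (hx : 0 ≤ x) : 0 ≤ f l s x :=
  mul_nonneg (Real.rpow_nonneg hx s) (Real.exp_pos _).le

lemma g_antitoneOn (hs : 0 < s) (hl : 0 < l) : AntitoneOn (g l s) (Ici 0) := by
  intro x hx y hy hxy
  have : x ^ s ≤ y ^ s := Real.rpow_le_rpow hx hxy hs.le
  exact Real.exp_le_exp.mpr (by nlinarith)

lemma integrableOn_aux (hs : 0 < s) (hl : 0 < l) {q : ℝ} (hq : -1 < q) :
    IntegrableOn (fun x : ℝ => x ^ q * Real.exp (-l * x ^ s)) (Ioi 0) := by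
  by_contra h
  have h0 : ∫ x in Ioi (0 : ℝ), x ^ q * Real.exp (-l * x ^ s) = 0 := integral_undef h
  rw [integral_rpow_mul_exp_neg_mul_rpow hs hq hl] at h0
  have hΓ := Real.Gamma_pos_of_pos (div_pos (show (0:ℝ) < q + 1 by linarith) hs)
  have h1 : (0 : ℝ) < l ^ (-(q + 1) / s) * (1 / s) * Real.Gamma ((q + 1) / s) := by positivity
  linarith

lemma integrableOn_g (hs : 0 < s) (hl : 0 < l) : IntegrableOn (g l s) (Ioi 0) := by
  have := integrableOn_aux (q := 0) hs hl (by norm_num)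
  refine this.congr_fun (fun x _ => ?_) measurableSet_Ioi
  simp [g, Real.rpow_zero]

lemma integrableOn_f (hs : 0 < s) (hl : 0 < l) : IntegrableOn (f l s) (Ioi 0) :=
  integrableOn_aux hs hl (by linarith)

lemma integrableOn_phi (hs : 0 < s) (hl : 0 < l) : IntegrableOn (phi l s) (Ioi 0) := by
  have h1 := (integrableOn_aux (q := s - 1) hs hl (by linarith)).const_mul s
  have h2 := (integrableOn_aux (q := 2 * s - 1) hs hl (by linarith)).const_mul (l * s)
  have h3 : IntegrableOn (fun x : ℝ => s * (x ^ (s - 1) * Real.exp (-l * x ^ s)) +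
      l * s * (x ^ (2 * s - 1) * Real.exp (-l * x ^ s))) (Ioi 0) := h1.add h2
  refine h3.congr_fun (fun x _ => ?_) measurableSet_Ioi
  simp only [phi]; ring

lemma integral_g (hs : 0 < s) (hl : 0 < l) :
    ∫ x in Ioi (0 : ℝ), g l s x = l ^ (-1 / s) * Real.Gamma (1 / s + 1) :=
  integral_exp_neg_mul_rpow hs hl

lemma integral_f (hs : 0 < s) (hl : 0 < l) :
    l * s * ∫ x in Ioi (0 : ℝ), f l s x = l ^ (-1 / s) * Real.Gamma (1 / s + 1) := by
  have h := integral_rpow_mul_exp_neg_mul_rpow hs (show (-1 : ℝ) < s by linarith) hl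
  have hΓ : (s + 1) / s = 1 / s + 1 := by rw [add_div, div_self hs.ne', add_comm]
  have hl' : l ^ (-(s + 1) / s) = l ^ (-1 / s) * l⁻¹ := by
    rw [← Real.rpow_neg_one l, ← Real.rpow_add hl]
    congr 1
    rw [neg_div, neg_div, add_div, div_self hs.ne']
    ring
  rw [show (f l s) = fun x => x ^ s * Real.exp (-l * x ^ s) from rfl, h, hΓ, hl']
  have h2 : l ≠ 0 := hl.ne'
  have h3 : s ≠ 0 := hs.ne'
  field_simp

lemma integral_phi_le (hs : 0 < s) (hl : 0 < l) :
    ∫ x in Ioi (0 : ℝ), phi l s x ≤ 2 / l := by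
  have h1 := integral_rpow_mul_exp_neg_mul_rpow hs (show (-1 : ℝ) < s - 1 by linarith) hl
  have h2 := integral_rpow_mul_exp_neg_mul_rpow hs (show (-1 : ℝ) < 2 * s - 1 by linarith) hl
  have hint1 := integrableOn_aux (q := s - 1) hs hl (by linarith)
  have hint2 := integrableOn_aux (q := 2 * s - 1) hs hl (by linarith)
  have hsplit : ∫ x in Ioi (0 : ℝ), phi l s x =
      s * (∫ x in Ioi (0 : ℝ), x ^ (s - 1) * Real.exp (-l * x ^ s)) +
        l * s * ∫ x in Ioi (0 : ℝ), x ^ (2 * s - 1) * Real.exp (-l * x ^ s) := by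
    rw [← integral_const_mul, ← integral_const_mul, ← integral_add (hint1.const_mul s)
      (hint2.const_mul (l * s))]
    refine setIntegral_congr_fun measurableSet_Ioi (fun x _ => ?_)
    simp only [phi]; ring
  have e1 : s - 1 + 1 = s := by ring
  have e2 : 2 * s - 1 + 1 = 2 * s := by ring
  rw [e1] at h1
  rw [e2] at h2
  have e3 : -s / s = -1 := by rw [neg_div, div_self hs.ne']
  have e4 : s / s = 1 := div_self hs.ne'
  have e5 : -(2 * s) / s = -2 := by rw [neg_div, mul_div_assoc, div_self hs.ne', mul_one]
  have e6 : 2 * s / s = 2 := by rw [mul_div_assoc, div_self hs.ne', mul_one]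
  rw [e3, e4] at h1
  rw [e5, e6] at h2
  rw [hsplit, h1, h2, Real.Gamma_one, Real.Gamma_two]
  have e7 : l ^ (-1 : ℝ) = l⁻¹ := Real.rpow_neg_one l
  have e8 : l ^ (-2 : ℝ) = (l * l)⁻¹ := by
    rw [show (-2 : ℝ) = -1 + -1 by norm_num, Real.rpow_add hl, e7, mul_inv]
  rw [e7, e8]
  apply le_of_eq
  have h2' : l ≠ 0 := hl.ne'
  have h3' : s ≠ 0 := hs.ne'
  field_simp
  ring

lemma contAt_df (hs : 0 < s) {x : ℝ} (hx : x ≠ 0) : ContinuousAt (df l s) x := by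
  have h1 : ContinuousAt (fun x : ℝ => x ^ (s - 1)) x :=
    Real.continuousAt_rpow_const x _ (Or.inl hx)
  have h2 : ContinuousAt (fun x : ℝ => x ^ s) x :=
    Real.continuousAt_rpow_const x _ (Or.inr hs.le)
  have h3 : ContinuousAt (fun x : ℝ => Real.exp (-l * x ^ s)) x :=
    Real.continuous_exp.continuousAt.comp (continuousAt_const.mul h2)
  exact ((continuousAt_const.mul h1).mul h3).add
    (h2.mul (h3.mul (continuousAt_const.mul (continuousAt_const.mul h1))))

lemma contAt_phi (hs : 0 < s) {x : ℝ} (hx : x ≠ 0) : ContinuousAt (phi l s) x := by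
  have h1 : ContinuousAt (fun x : ℝ => x ^ (s - 1)) x :=
    Real.continuousAt_rpow_const x _ (Or.inl hx)
  have h1' : ContinuousAt (fun x : ℝ => x ^ (2 * s - 1)) x :=
    Real.continuousAt_rpow_const x _ (Or.inl hx)
  have h2 : ContinuousAt (fun x : ℝ => x ^ s) x :=
    Real.continuousAt_rpow_const x _ (Or.inr hs.le)
  have h3 : ContinuousAt (fun x : ℝ => Real.exp (-l * x ^ s)) x :=
    Real.continuous_exp.continuousAt.comp (continuousAt_const.mul h2)
  exact ((continuousAt_const.mul h1).mul h3).add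
    ((continuousAt_const.mul h1').mul h3)

lemma phi_nonneg (hs : 0 < s) (hl : 0 < l) {x : ℝ} (hx : 0 ≤ x) : 0 ≤ phi l s x := by
  have h1 : (0:ℝ) ≤ x ^ (s - 1) := Real.rpow_nonneg hx _
  have h2 : (0:ℝ) ≤ x ^ (2 * s - 1) := Real.rpow_nonneg hx _
  have h3 := (Real.exp_pos (-l * x ^ s)).le
  unfold phi
  nlinarith [mul_nonneg (mul_nonneg (mul_nonneg hl.le hs.le) h2) h3,
    mul_nonneg (mul_nonneg hs.le h1) h3]

lemma hasDerivAt_f (hs : 0 < s) {x : ℝ} (hx : x ≠ 0) :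
    HasDerivAt (f l s) (df l s x) x := by
  have h1 : HasDerivAt (fun x : ℝ => x ^ s) (s * x ^ (s - 1)) x :=
    Real.hasDerivAt_rpow_const (Or.inl hx)
  have h2 : HasDerivAt (fun x : ℝ => Real.exp (-l * x ^ s))
      (Real.exp (-l * x ^ s) * (-l * (s * x ^ (s - 1)))) x :=
    (Real.hasDerivAt_exp _).comp x (h1.const_mul (-l))
  exact h1.mul h2

lemma abs_df_le (hs : 0 < s) (hl : 0 < l) {x : ℝ} (hx : 0 < x) : |df l s x| ≤ phi l s x := by
  have hxs : x ^ s * x ^ (s - 1) = x ^ (2 * s - 1) := by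
    rw [← Real.rpow_add hx]; ring_nf
  have hdf : df l s x = s * x ^ (s - 1) * Real.exp (-l * x ^ s) -
      l * s * x ^ (2 * s - 1) * Real.exp (-l * x ^ s) := by
    simp only [df]; rw [← hxs]; ring
  have h1 : 0 ≤ s * x ^ (s - 1) * Real.exp (-l * x ^ s) := by positivity
  have h2 : 0 ≤ l * s * x ^ (2 * s - 1) * Real.exp (-l * x ^ s) := by positivity
  rw [hdf]
  unfold phi
  rw [abs_le]
  constructor <;> nlinarith

lemma g_le_integral (hs : 0 < s) (hl : 0 < l) {a : ℝ} (ha : 0 ≤ a) :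
    g l s (a + 1) ≤ ∫ x in a..(a + 1), g l s x := by
  have hle : a ≤ a + 1 := by linarith
  have h1 : ∫ _x in a..(a + 1), g l s (a + 1) ≤ ∫ x in a..(a + 1), g l s x :=
    intervalIntegral.integral_mono_on hle intervalIntegrable_const
      ((cont_g hs).intervalIntegrable _ _)
      (fun x hx => g_antitoneOn hs hl (le_trans ha hx.1) (by linarith : (0:ℝ) ≤ a + 1) hx.2)
  simpa using h1

lemma integral_le_g (hs : 0 < s) (hl : 0 < l) {a : ℝ} (ha : 0 ≤ a) :
    ∫ x in (a + 1)..(a + 2), g l s x ≤ g l s (a + 1) := by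
  have hle : a + 1 ≤ a + 2 := by linarith
  have h1 : ∫ x in (a + 1)..(a + 2), g l s x ≤ ∫ _x in (a + 1)..(a + 2), g l s (a + 1) :=
    intervalIntegral.integral_mono_on hle ((cont_g hs).intervalIntegrable _ _)
      intervalIntegrable_const
      (fun x hx => g_antitoneOn hs hl (by linarith : (0:ℝ) ≤ a + 1)
        (le_trans (by linarith : (0:ℝ) ≤ a + 1) hx.1) hx.1)
  rw [intervalIntegral.integral_const, show a + 2 - (a + 1) = 1 by ring, one_smul] at h1
  exact h1

lemma intervalIntegrable_phi (hs : 0 < s) {u v : ℝ} (hu : 0 < u) (huv : u ≤ v) :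
    IntervalIntegrable (phi l s) volume u v := by
  apply ContinuousOn.intervalIntegrable
  intro y hy
  rw [Set.uIcc_of_le huv] at hy
  exact (contAt_phi hs (ne_of_gt (lt_of_lt_of_le hu hy.1))).continuousWithinAt

lemma abs_f_sub_f_le (hs : 0 < s) (hl : 0 < l) {a x b : ℝ} (ha : 0 < a) (hax : a ≤ x)
    (hxb : x ≤ b) : |f l s b - f l s x| ≤ ∫ t in a..b, phi l s t := by
  have hx0 : 0 < x := lt_of_lt_of_le ha hax
  have hderiv : ∀ y ∈ Set.uIcc x b, HasDerivAt (f l s) (df l s y) y := by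
    intro y hy
    rw [Set.uIcc_of_le hxb] at hy
    exact hasDerivAt_f hs (ne_of_gt (lt_of_lt_of_le hx0 hy.1))
  have hcont : ContinuousOn (df l s) (Set.uIcc x b) := by
    intro y hy
    rw [Set.uIcc_of_le hxb] at hy
    exact (contAt_df hs (ne_of_gt (lt_of_lt_of_le hx0 hy.1))).continuousWithinAt
  have hii : IntervalIntegrable (df l s) volume x b := hcont.intervalIntegrable
  have heq := intervalIntegral.integral_eq_sub_of_hasDerivAt hderiv hii
  rw [← heq]
  calc |∫ t in x..b, df l s t| ≤ ∫ t in x..b, |df l s t| :=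
        intervalIntegral.abs_integral_le_integral_abs hxb
    _ ≤ ∫ t in x..b, phi l s t := by
        refine intervalIntegral.integral_mono_on hxb hcont.abs.intervalIntegrable
          (intervalIntegrable_phi hs hx0 hxb) (fun t ht => abs_df_le hs hl
            (lt_of_lt_of_le hx0 ht.1))
    _ ≤ ∫ t in a..b, phi l s t := by
        rw [← intervalIntegral.integral_add_adjacent_intervals
          (intervalIntegrable_phi hs ha hax) (intervalIntegrable_phi hs hx0 hxb)]
        have h0 : 0 ≤ ∫ t in a..x, phi l s t :=
          intervalIntegral.integral_nonneg hax (fun t ht => phi_nonneg hs hl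
            (le_trans ha.le ht.1))
        linarith

lemma key_f (hs : 0 < s) (hl : 0 < l) {a : ℝ} (ha : 0 < a) :
    |f l s (a + 1) - ∫ x in a..(a + 1), f l s x| ≤ ∫ x in a..(a + 1), phi l s x := by
  have hle : a ≤ a + 1 := by linarith
  have hfc : IntervalIntegrable (f l s) volume a (a + 1) := (cont_f hs).intervalIntegrable _ _
  have e1 : f l s (a + 1) - ∫ x in a..(a + 1), f l s x
      = ∫ x in a..(a + 1), (f l s (a + 1) - f l s x) := by
    rw [intervalIntegral.integral_sub intervalIntegrable_const hfc,
      intervalIntegral.integral_const]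
    simp
  rw [e1]
  have hW : IntervalIntegrable (fun x => f l s (a + 1) - f l s x) volume a (a + 1) :=
    intervalIntegrable_const.sub hfc
  calc |∫ x in a..(a + 1), (f l s (a + 1) - f l s x)|
      ≤ ∫ x in a..(a + 1), |f l s (a + 1) - f l s x| :=
        intervalIntegral.abs_integral_le_integral_abs hle
    _ ≤ ∫ _x in a..(a + 1), (∫ t in a..(a + 1), phi l s t) := by
        refine intervalIntegral.integral_mono_on hle hW.abs intervalIntegrable_const
          (fun x hx => abs_f_sub_f_le hs hl ha hx.1 hx.2)
    _ = ∫ t in a..(a + 1), phi l s t := by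
        rw [intervalIntegral.integral_const]; simp

lemma hasSum_integral_shift {F : ℝ → ℝ} (hcont : ∀ x : ℝ, 1 ≤ x → ContinuousAt F x)
    (hint : IntegrableOn F (Ioi 1)) (hnn : ∀ x : ℝ, (1:ℝ) ≤ x → 0 ≤ F x) :
    HasSum (fun i : ℕ => ∫ x in ((i:ℝ) + 1)..((i:ℝ) + 2), F x) (∫ x in Ioi (1:ℝ), F x) := by
  have hii : ∀ u v : ℝ, 1 ≤ u → u ≤ v → IntervalIntegrable F volume u v := by
    intro u v hu huv
    apply ContinuousOn.intervalIntegrable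
    intro y hy
    rw [Set.uIcc_of_le huv] at hy
    exact (hcont y (le_trans hu hy.1)).continuousWithinAt
  have hterm : ∀ i : ℕ, 0 ≤ ∫ x in ((i:ℝ) + 1)..((i:ℝ) + 2), F x := by
    intro i
    refine intervalIntegral.integral_nonneg (by linarith) (fun x hx => hnn x ?_)
    have : (0:ℝ) ≤ (i:ℝ) := Nat.cast_nonneg i
    linarith [hx.1]
  rw [hasSum_iff_tendsto_nat_of_nonneg hterm]
  have hsum : ∀ n : ℕ, ∑ i ∈ Finset.range n, ∫ x in ((i:ℝ) + 1)..((i:ℝ) + 2), F x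
      = ∫ x in (1:ℝ)..((n:ℝ) + 1), F x := by
    intro n
    have h := intervalIntegral.sum_integral_adjacent_intervals
      (a := fun i : ℕ => (i:ℝ) + 1) (n := n) (μ := volume) (f := F) ?_
    · convert h using 2 with i
      · push_cast; ring_nf
      · push_cast; ring_nf
    · intro k _
      refine hii _ _ (by simp) (by push_cast; linarith)
  have htend := MeasureTheory.intervalIntegral_tendsto_integral_Ioi 1 hint
    (tendsto_atTop_add_const_right atTop 1 tendsto_natCast_atTop_atTop)
  exact Tendsto.congr (fun n => (hsum n).symm) htend

lemma sum_g_le (hs : 0 < s) (hl : 0 < l) (n : ℕ) :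
    ∑ i ∈ Finset.range n, g l s ((i:ℝ) + 1) ≤ ∫ x in Ioi (0:ℝ), g l s x := by
  calc ∑ i ∈ Finset.range n, g l s ((i:ℝ) + 1)
      ≤ ∑ i ∈ Finset.range n, ∫ x in ((i:ℝ))..((i:ℝ) + 1), g l s x :=
        Finset.sum_le_sum (fun i _ => g_le_integral hs hl (Nat.cast_nonneg i))
    _ = ∫ x in (0:ℝ)..(n:ℝ), g l s x := by
        have h := intervalIntegral.sum_integral_adjacent_intervals
          (a := fun i : ℕ => (i:ℝ)) (n := n) (μ := volume) (f := g l s)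
          (fun k _ => (cont_g hs).intervalIntegrable _ _)
        convert h using 2 with i
        · push_cast; ring_nf
        · simp
    _ ≤ ∫ x in Ioi (0:ℝ), g l s x := by
        rcases Nat.eq_zero_or_pos n with h0 | h0
        · subst h0
          simp
          exact setIntegral_nonneg measurableSet_Ioi (fun x _ => g_nonneg x)
        · rw [intervalIntegral.integral_of_le (by positivity)]
          refine setIntegral_mono_set (integrableOn_g hs hl)
            (Filter.Eventually.of_forall (fun x => g_nonneg x))
            (Filter.Eventually.of_forall (fun x hx => Ioc_subset_Ioi_self hx))

lemma summable_g (hs : 0 < s) (hl : 0 < l) : Summable (fun i : ℕ => g l s ((i:ℝ) + 1)) :=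
  summable_of_sum_range_le (fun _ => g_nonneg _) (sum_g_le hs hl)

lemma D_le (hs : 0 < s) (hl : 0 < l) :
    ∑' i : ℕ, g l s ((i:ℝ) + 1) ≤ ∫ x in Ioi (0:ℝ), g l s x :=
  Real.tsum_le_of_sum_range_le (fun _ => g_nonneg _) (sum_g_le hs hl)

lemma D_pos (hs : 0 < s) (hl : 0 < l) : 0 < ∑' i : ℕ, g l s ((i:ℝ) + 1) :=
  Summable.tsum_pos (summable_g hs hl) (fun _ => g_nonneg _) 0 (Real.exp_pos _)

lemma integral_split (hs : 0 < s) (hl : 0 < l) {F : ℝ → ℝ} (hint : IntegrableOn F (Ioi 0)) :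
    ∫ x in Ioi (0:ℝ), F x = (∫ x in Ioc (0:ℝ) 1, F x) + ∫ x in Ioi (1:ℝ), F x := by
  rw [← MeasureTheory.setIntegral_union (Set.Ioc_disjoint_Ioi le_rfl) measurableSet_Ioi
    (hint.mono_set Set.Ioc_subset_Ioi_self)
    (hint.mono_set (Set.Ioi_subset_Ioi zero_le_one)),
    Set.Ioc_union_Ioi_eq_Ioi zero_le_one]

lemma D_ge (hs : 0 < s) (hl : 0 < l) :
    (∫ x in Ioi (0:ℝ), g l s x) - 1 ≤ ∑' i : ℕ, g l s ((i:ℝ) + 1) := by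
  have hHS : HasSum (fun i : ℕ => ∫ x in ((i:ℝ) + 1)..((i:ℝ) + 2), g l s x)
      (∫ x in Ioi (1:ℝ), g l s x) :=
    hasSum_integral_shift (fun x _ => (cont_g hs).continuousAt)
      ((integrableOn_g hs hl).mono_set (Set.Ioi_subset_Ioi zero_le_one))
      (fun x _ => g_nonneg x)
  have h1 : ∫ x in Ioi (1:ℝ), g l s x ≤ ∑' i : ℕ, g l s ((i:ℝ) + 1) := by
    rw [← hHS.tsum_eq]
    exact Summable.tsum_le_tsum (fun i => integral_le_g hs hl (Nat.cast_nonneg i)) hHS.summable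
      (summable_g hs hl)
  have hsplit := integral_split hs hl (integrableOn_g hs hl)
  have hIoc : ∫ x in Ioc (0:ℝ) 1, g l s x ≤ 1 := by
    have : ∫ x in Ioc (0:ℝ) 1, g l s x ≤ ∫ _x in Ioc (0:ℝ) 1, (1:ℝ) := by
      refine setIntegral_mono_on ((integrableOn_g hs hl).mono_set Set.Ioc_subset_Ioi_self)
        (integrableOn_const (by simp)) measurableSet_Ioc ?_
      intro x hx
      have hxs : (0:ℝ) ≤ x ^ s := Real.rpow_nonneg hx.1.le s
      have : -l * x ^ s ≤ 0 := by nlinarith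
      simpa [g] using Real.exp_le_one_iff.mpr this
    simpa using this
  linarith

lemma f_le (hs : 0 < s) (hl : 0 < l) {x : ℝ} (hx : 0 ≤ x) : f l s x ≤ 1 / l := by
  have hxs : (0:ℝ) ≤ x ^ s := Real.rpow_nonneg hx s
  have h1 : l * x ^ s ≤ Real.exp (l * x ^ s) := by
    linarith [Real.add_one_le_exp (l * x ^ s)]
  have h3 := Real.exp_pos (l * x ^ s)
  have h2 : (l * x ^ s) * Real.exp (-(l * x ^ s)) ≤ 1 := by
    rw [Real.exp_neg]
    calc (l * x ^ s) * (Real.exp (l * x ^ s))⁻¹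
        ≤ Real.exp (l * x ^ s) * (Real.exp (l * x ^ s))⁻¹ :=
          mul_le_mul_of_nonneg_right h1 (by positivity)
      _ = 1 := mul_inv_cancel₀ h3.ne'
  have heq : f l s x = (l * x ^ s) * Real.exp (-(l * x ^ s)) / l := by
    unfold f; rw [neg_mul]; field_simp
  rw [heq]
  exact div_le_div_of_nonneg_right h2 hl.le

lemma N_err (hs : 0 < s) (hl : 0 < l) :
    |(∑' i : ℕ, f l s ((i:ℝ) + 1)) - ∫ x in Ioi (0:ℝ), f l s x| ≤ 4 / l := by
  have hHSf : HasSum (fun i : ℕ => ∫ x in ((i:ℝ)+1)..((i:ℝ)+2), f l s x)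
      (∫ x in Ioi (1:ℝ), f l s x) :=
    hasSum_integral_shift (fun x _ => (cont_f hs).continuousAt)
      ((integrableOn_f hs hl).mono_set (Set.Ioi_subset_Ioi zero_le_one))
      (fun x hx => f_nonneg (by linarith))
  have hHSphi : HasSum (fun i : ℕ => ∫ x in ((i:ℝ)+1)..((i:ℝ)+2), phi l s x)
      (∫ x in Ioi (1:ℝ), phi l s x) :=
    hasSum_integral_shift (fun x hx => contAt_phi hs (ne_of_gt (lt_of_lt_of_le one_pos hx)))
      ((integrableOn_phi hs hl).mono_set (Set.Ioi_subset_Ioi zero_le_one))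
      (fun x hx => phi_nonneg hs hl (by linarith))
  have hterm : ∀ i : ℕ, |f l s ((i:ℝ)+2) - ∫ x in ((i:ℝ)+1)..((i:ℝ)+2), f l s x|
      ≤ ∫ x in ((i:ℝ)+1)..((i:ℝ)+2), phi l s x := by
    intro i
    have h := key_f hs hl (a := (i:ℝ)+1) (by positivity)
    have e : ((i:ℝ)+1) + 1 = (i:ℝ)+2 := by ring
    rw [e] at h; exact h
  have hsummf2 : Summable (fun i : ℕ => f l s ((i:ℝ)+2)) := by
    refine Summable.of_nonneg_of_le (fun i => f_nonneg (by positivity))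
      (fun i => ?_) (hHSf.summable.add hHSphi.summable)
    have h := (abs_le.mp (hterm i)).2
    linarith
  have hub : (∑' i : ℕ, f l s ((i:ℝ)+2))
      ≤ (∫ x in Ioi (1:ℝ), f l s x) + ∫ x in Ioi (1:ℝ), phi l s x := by
    rw [← (hHSf.add hHSphi).tsum_eq]
    refine Summable.tsum_le_tsum (fun n => ?_) hsummf2 (hHSf.add hHSphi).summable
    have := (abs_le.mp (hterm n)).2
    linarith
  have hlb : (∫ x in Ioi (1:ℝ), f l s x) - ∫ x in Ioi (1:ℝ), phi l s x
      ≤ ∑' i : ℕ, f l s ((i:ℝ)+2) := by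
    rw [← (hHSf.sub hHSphi).tsum_eq]
    refine Summable.tsum_le_tsum (fun n => ?_) (hHSf.sub hHSphi).summable hsummf2
    have := (abs_le.mp (hterm n)).1
    linarith
  have hW : ∫ x in Ioi (1:ℝ), phi l s x ≤ 2 / l := by
    refine le_trans ?_ (integral_phi_le hs hl)
    refine setIntegral_mono_set (integrableOn_phi hs hl)
      ((ae_restrict_iff' measurableSet_Ioi).mpr
        (Filter.Eventually.of_forall (fun x hx => phi_nonneg hs hl (le_of_lt hx))))
      (Filter.Eventually.of_forall (fun x hx => show x ∈ Ioi (0:ℝ) from Set.Ioi_subset_Ioi zero_le_one hx))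
  have hWnn : 0 ≤ ∫ x in Ioi (1:ℝ), phi l s x :=
    setIntegral_nonneg measurableSet_Ioi
      (fun x hx => phi_nonneg hs hl (by have := Set.mem_Ioi.mp hx; linarith))
  have hIoc_ub : ∫ x in Ioc (0:ℝ) 1, f l s x ≤ 1 / l := by
    have h : ∫ x in Ioc (0:ℝ) 1, f l s x ≤ ∫ _x in Ioc (0:ℝ) 1, (1/l : ℝ) :=
      setIntegral_mono_on ((integrableOn_f hs hl).mono_set Set.Ioc_subset_Ioi_self)
        (integrableOn_const (by simp)) measurableSet_Ioc
        (fun x hx => f_le hs hl hx.1.le)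
    simpa using h
  have hIoc_lb : 0 ≤ ∫ x in Ioc (0:ℝ) 1, f l s x :=
    setIntegral_nonneg measurableSet_Ioc (fun x hx => f_nonneg hx.1.le)
  have hf1_ub : f l s 1 ≤ 1 / l := f_le hs hl zero_le_one
  have hf1_lb : 0 ≤ f l s 1 := f_nonneg zero_le_one
  have hsummf1 : Summable (fun i : ℕ => f l s ((i:ℝ)+1)) := by
    have he : (fun i : ℕ => f l s ((((i + 1 : ℕ)):ℝ)+1)) = fun i : ℕ => f l s ((i:ℝ)+2) := by
      funext i; congr 1; push_cast; ring
    exact (summable_nat_add_iff 1).mp (he ▸ hsummf2)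
  have hshift : (∑' i : ℕ, f l s ((i:ℝ)+1)) = f l s 1 + ∑' i : ℕ, f l s ((i:ℝ)+2) := by
    rw [Summable.tsum_eq_zero_add hsummf1]
    congr 1
    · norm_num
    · refine tsum_congr (fun i => ?_); congr 1; push_cast; ring
  have hsplit := integral_split hs hl (integrableOn_f hs hl)
  have e24 : 4 / l = 1/l + 1/l + 2/l := by ring
  rw [abs_le]
  constructor
  · rw [hshift, hsplit]; linarith
  · rw [hshift, hsplit]; linarith

end MaxEntAux

open MaxEntAux

/-- For the maximum-entropy distribution `P_λ(i) ∝ exp(-λ i^s)`, the guessing moment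
`G(λ) = ∑ i^s P_λ(i)` satisfies `λ·s·G(λ) → 1` as `λ → 0⁺`. -/
theorem maxent_guessing_moment_asymptotic (s : ℝ) (hs : 0 < s) :
    Tendsto (fun l : ℝ =>
        l * s * ((∑' i : ℕ, ((i : ℝ) + 1) ^ s * Real.exp (-l * ((i : ℝ) + 1) ^ s)) /
          (∑' i : ℕ, Real.exp (-l * ((i : ℝ) + 1) ^ s))))
      (nhdsWithin 0 (Set.Ioi 0)) (nhds 1) := by
  have hcpos : 0 < Real.Gamma (1/s + 1) := Real.Gamma_pos_of_pos (by positivity)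
  set c := Real.Gamma (1/s + 1) with hc
  set A : ℝ → ℝ := fun l => l ^ (-1/s) * c with hA
  have hAtop : Tendsto A (nhdsWithin 0 (Set.Ioi 0)) atTop := by
    have h1 : Tendsto (fun l : ℝ => l ^ (-1/s)) (nhdsWithin 0 (Set.Ioi 0)) atTop := by
      have h2 : Tendsto (fun l : ℝ => (l⁻¹) ^ (1/s)) (nhdsWithin 0 (Set.Ioi 0)) atTop :=
        (tendsto_rpow_atTop (by positivity)).comp tendsto_inv_nhdsGT_zero
      refine h2.congr' ?_
      filter_upwards [self_mem_nhdsWithin] with l hl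
      rw [Real.inv_rpow (le_of_lt hl), ← Real.rpow_neg (le_of_lt hl), neg_div]
    exact Tendsto.atTop_mul_const hcpos h1
  have hlow : Tendsto (fun l => (A l - 4*s)/(A l)) (nhdsWithin 0 (Set.Ioi 0)) (nhds 1) := by
    have h1 : Tendsto (fun a : ℝ => 1 - (4*s)/a) atTop (nhds (1 - 0)) :=
      tendsto_const_nhds.sub (Tendsto.div_atTop tendsto_const_nhds tendsto_id)
    have h2 : Tendsto (fun a : ℝ => (a - 4*s)/a) atTop (nhds 1) := by
      rw [show (1:ℝ) - 0 = 1 by norm_num] at h1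
      refine Tendsto.congr' ?_ h1
      filter_upwards [eventually_gt_atTop (0:ℝ)] with a ha
      rw [sub_div, div_self ha.ne']
    exact h2.comp hAtop
  have hup : Tendsto (fun l => (A l + 4*s)/(A l - 1)) (nhdsWithin 0 (Set.Ioi 0)) (nhds 1) := by
    have h0 : Tendsto (fun a : ℝ => a - 1) atTop atTop :=
      tendsto_atTop_add_const_right atTop (-1) tendsto_id
    have h1 : Tendsto (fun a : ℝ => 1 + (4*s+1)/(a-1)) atTop (nhds (1 + 0)) :=
      tendsto_const_nhds.add (Tendsto.div_atTop tendsto_const_nhds h0)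
    have h2 : Tendsto (fun a : ℝ => (a + 4*s)/(a - 1)) atTop (nhds 1) := by
      rw [show (1:ℝ) + 0 = 1 by norm_num] at h1
      refine Tendsto.congr' ?_ h1
      filter_upwards [eventually_gt_atTop (1:ℝ)] with a ha
      have ha1 : a - 1 ≠ 0 := by intro h; rw [sub_eq_zero] at h; exact ha.ne' h
      field_simp
      ring
    exact h2.comp hAtop
  have key : ∀ᶠ l in nhdsWithin (0:ℝ) (Set.Ioi 0),
      (A l - 4*s)/(A l) ≤ l * s *
          ((∑' i : ℕ, ((i : ℝ) + 1) ^ s * Real.exp (-l * ((i : ℝ) + 1) ^ s)) /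
            (∑' i : ℕ, Real.exp (-l * ((i : ℝ) + 1) ^ s))) ∧
        l * s * ((∑' i : ℕ, ((i : ℝ) + 1) ^ s * Real.exp (-l * ((i : ℝ) + 1) ^ s)) /
            (∑' i : ℕ, Real.exp (-l * ((i : ℝ) + 1) ^ s))) ≤ (A l + 4*s)/(A l - 1) := by
    filter_upwards [hAtop.eventually_ge_atTop (max 2 (4*s+1)), self_mem_nhdsWithin]
      with l hAl hl'
    have hl : (0:ℝ) < l := hl'
    have hA2 : (2:ℝ) ≤ A l := le_trans (le_max_left _ _) hAl
    have hA4 : 4*s+1 ≤ A l := le_trans (le_max_right _ _) hAl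
    have hs4 : (0:ℝ) ≤ 4*s := by positivity
    have hIg : ∫ x in Set.Ioi (0:ℝ), MaxEntAux.g l s x = A l := integral_g hs hl
    have hD_le : (∑' i : ℕ, Real.exp (-l * ((i:ℝ) + 1) ^ s)) ≤ A l := hIg ▸ D_le hs hl
    have hD_ge : A l - 1 ≤ ∑' i : ℕ, Real.exp (-l * ((i:ℝ) + 1) ^ s) := by
      have h := D_ge hs hl
      rw [hIg] at h
      exact h
    have hD_pos : (0:ℝ) < ∑' i : ℕ, Real.exp (-l * ((i:ℝ) + 1) ^ s) := D_pos hs hl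
    set D := ∑' i : ℕ, Real.exp (-l * ((i:ℝ) + 1) ^ s) with hD
    set N := ∑' i : ℕ, ((i:ℝ) + 1) ^ s * Real.exp (-l * ((i:ℝ) + 1) ^ s) with hN
    have habs : |l * s * N - A l| ≤ 4 * s := by
      have h1 : l * s * N - A l = l * s * (N - ∫ x in Set.Ioi (0:ℝ), MaxEntAux.f l s x) := by
        have hAeq : A l = l * s * ∫ x in Set.Ioi (0:ℝ), MaxEntAux.f l s x :=
          (integral_f hs hl).symm
        rw [hAeq]; ring
      have h2 : |N - ∫ x in Set.Ioi (0:ℝ), MaxEntAux.f l s x| ≤ 4 / l := N_err hs hl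
      rw [h1, abs_mul, abs_of_pos (by positivity : (0:ℝ) < l * s)]
      calc l * s * |N - ∫ x in Set.Ioi (0:ℝ), MaxEntAux.f l s x|
          ≤ l * s * (4 / l) := mul_le_mul_of_nonneg_left h2 (by positivity)
        _ = 4 * s := by field_simp
    have hNl : A l - 4*s ≤ l * s * N := by linarith [(abs_le.mp habs).1]
    have hNu : l * s * N ≤ A l + 4*s := by linarith [(abs_le.mp habs).2]
    have hfrac : l * s * (N / D) = (l * s * N) / D := by ring
    constructor
    · rw [hfrac]
      calc (A l - 4*s)/(A l) ≤ (A l - 4*s)/D :=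
            div_le_div_of_nonneg_left (by linarith) (by linarith) hD_le
        _ ≤ (l * s * N)/D := div_le_div_of_nonneg_right hNl (by linarith)
    · rw [hfrac]
      calc (l * s * N)/D ≤ (A l + 4*s)/D := div_le_div_of_nonneg_right hNu (by linarith)
        _ ≤ (A l + 4*s)/(A l - 1) :=
            div_le_div_of_nonneg_left (by linarith) (by linarith) hD_ge
  exact tendsto_of_tendsto_of_tendsto_of_le_of_le' hlow hup
    (key.mono fun l h => h.1) (key.mono fun l h => h.2)
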